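/- Let L be a complete lattice whose set of non-trivial ideals Id(L) is countable. Then the Scott space ΣL is sober. -/

import Mathlib

/-- An ideal of a poset: a nonempty, directed lower set.  It is *non-trivial*
if it contains no maximum element. -/
def NontrivialIdeal {P : Type*} [Preorder P] (I : Set P) : Prop :=
  I.Nonempty ∧ DirectedOn (· ≤ ·) I ∧ IsLowerSet I ∧ ¬ ∃ m ∈ I, ∀ x ∈ I, x ≤ m

/-- A space is sober if it is `T₀` and every irreducible closed set is the closure of a point. -/
def SoberSpace (X : Type*) [TopologicalSpace X] : Prop :=
  @T0Space X _ ∧ @QuasiSober X _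

namespace CountIdealSober

open Set
open scoped Classical

variable {L : Type*} [CompleteLattice L]

lemma sSup_image_sup' {I : Set L} (hne : I.Nonempty) (g : L) :
    sSup ((fun y => y ⊔ g) '' I) = sSup I ⊔ g := by
  apply le_antisymm
  · apply sSup_le
    rintro _ ⟨y, hy, rfl⟩
    exact sup_le_sup_right (le_sSup hy) g
  · obtain ⟨y0, hy0⟩ := hne
    refine sup_le (sSup_le fun y hy => ?_) ?_
    · exact le_trans le_sup_left (le_sSup ⟨y, hy, rfl⟩)
    · exact le_trans le_sup_right (le_sSup ⟨y0, hy0, rfl⟩)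

/-- The selector: picks an element of the ideal `I` which is either outside `A`
or whose sup with every visible generator of the opposite list stays outside `A`. -/
noncomputable def sel (A I : Set L) (l : List L) : L :=
  if h : ∃ y ∈ I, y ∉ A ∨ ∀ g ∈ l, g ∈ A → y ⊔ g ∉ A then h.choose
  else if h2 : I.Nonempty then h2.choose else ⊥

lemma sel_mem {A I : Set L} {l : List L} (hne : I.Nonempty) : sel A I l ∈ I := by
  by_cases h : ∃ y ∈ I, y ∉ A ∨ ∀ g ∈ l, g ∈ A → y ⊔ g ∉ A
  · rw [sel, dif_pos h]
    exact h.choose_spec.1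
  · rw [sel, dif_neg h, dif_pos hne]
    exact hne.choose_spec

lemma sel_spec {A I : Set L} {l : List L}
    (h : ∃ y ∈ I, y ∉ A ∨ ∀ g ∈ l, g ∈ A → y ⊔ g ∉ A) :
    sel A I l ∉ A ∨ ∀ g ∈ l, g ∈ A → sel A I l ⊔ g ∉ A := by
  unfold sel
  rw [dif_pos h]
  exact h.choose_spec.2

/-- Grow the first list by a selector if the sup of `I` is above some generator. -/
noncomputable def growU (A : Set L) (p : List L × List L) (I : Set L) : List L :=
  if ∃ g ∈ p.1, g ≤ sSup I then p.1 ++ [sel A I p.2] else p.1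

/-- Grow both lists (first list first, then the second, which may use the new first list). -/
noncomputable def grow (A : Set L) (p : List L × List L) (I : Set L) : List L × List L :=
  (growU A p I,
    if ∃ g ∈ p.2, g ≤ sSup I then p.2 ++ [sel A I (growU A p I)] else p.2)

/-- Cross-invariant: sups of visible generators of the two sides escape `A`. -/
def Inv (A : Set L) (p : List L × List L) : Prop :=
  ∀ g ∈ p.1, ∀ g' ∈ p.2, g ∈ A → g' ∈ A → g ⊔ g' ∉ A

lemma exists_avoid {A : Set L} (hlow : IsLowerSet A)
    (hAc : ∀ ⦃d : Set L⦄, d.Nonempty → DirectedOn (· ≤ ·) d → d ⊆ A → sSup d ∈ A)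
    {I : Set L} (hne : I.Nonempty) (hdir : DirectedOn (· ≤ ·) I) :
    ∀ l : List L, (∀ g ∈ l, g ∈ A → sSup I ⊔ g ∉ A) →
      ∃ y ∈ I, ∀ g ∈ l, g ∈ A → y ⊔ g ∉ A := by
  intro l
  induction l with
  | nil => exact fun _ => ⟨hne.choose, hne.choose_spec, by simp⟩
  | cons a l ih =>
    intro h
    obtain ⟨y1, hy1I, hy1⟩ := ih (fun g hg => h g (List.mem_cons_of_mem a hg))
    by_cases ha : a ∈ A
    · have hsa : sSup I ⊔ a ∉ A := h a List.mem_cons_self ha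
      have h2 : ∃ y2 ∈ I, y2 ⊔ a ∉ A := by
        by_contra hc
        push_neg at hc
        apply hsa
        have himg : sSup ((fun y => y ⊔ a) '' I) ∈ A := by
          refine hAc (hne.image _) ?_ ?_
          · rintro _ ⟨z1, hz1, rfl⟩ _ ⟨z2, hz2, rfl⟩
            obtain ⟨z3, hz3, h13, h23⟩ := hdir z1 hz1 z2 hz2
            exact ⟨z3 ⊔ a, ⟨z3, hz3, rfl⟩, sup_le_sup_right h13 a, sup_le_sup_right h23 a⟩
          · rintro _ ⟨y, hy, rfl⟩
            exact hc y hy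
        rwa [sSup_image_sup' hne] at himg
      obtain ⟨y2, hy2I, hy2⟩ := h2
      obtain ⟨y, hyI, hle1, hle2⟩ := hdir y1 hy1I y2 hy2I
      refine ⟨y, hyI, fun g hg hgA => ?_⟩
      rcases List.mem_cons.mp hg with rfl | hgl
      · exact fun hmem => hy2 (hlow (sup_le_sup_right hle2 g) hmem)
      · exact fun hmem => hy1 g hgl hgA (hlow (sup_le_sup_right hle1 g) hmem)
    · refine ⟨y1, hy1I, fun g hg hgA => ?_⟩
      rcases List.mem_cons.mp hg with rfl | hgl
      · exact absurd hgA ha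
      · exact hy1 g hgl hgA

lemma key {A : Set L} (hlow : IsLowerSet A)
    (hAc : ∀ ⦃d : Set L⦄, d.Nonempty → DirectedOn (· ≤ ·) d → d ⊆ A → sSup d ∈ A)
    {I : Set L} (hne : I.Nonempty) (hdir : DirectedOn (· ≤ ·) I) (l : List L)
    (h : I ⊆ A → ∀ g ∈ l, g ∈ A → sSup I ⊔ g ∉ A) :
    ∃ y ∈ I, y ∉ A ∨ ∀ g ∈ l, g ∈ A → y ⊔ g ∉ A := by
  by_cases hIA : I ⊆ A
  · obtain ⟨y, hyI, hy⟩ := exists_avoid hlow hAc hne hdir l (h hIA)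
    exact ⟨y, hyI, Or.inr hy⟩
  · obtain ⟨y, hyI, hyA⟩ := Set.not_subset.mp hIA
    exact ⟨y, hyI, Or.inl hyA⟩

lemma grow_mem1 {A : Set L} {p : List L × List L} {I : Set L} {g : L} (hg : g ∈ p.1) :
    g ∈ (grow A p I).1 := by
  show g ∈ growU A p I
  unfold growU
  split_ifs with h
  · exact List.mem_append_left _ hg
  · exact hg

lemma grow_mem2 {A : Set L} {p : List L × List L} {I : Set L} {g : L} (hg : g ∈ p.2) :
    g ∈ (grow A p I).2 := by
  have heq : (grow A p I).2
      = if ∃ g ∈ p.2, g ≤ sSup I then p.2 ++ [sel A I (growU A p I)] else p.2 := rfl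
  rw [heq]
  split_ifs with h
  · exact List.mem_append_left _ hg
  · exact hg

lemma grow_inv {A : Set L} (hlow : IsLowerSet A)
    (hAc : ∀ ⦃d : Set L⦄, d.Nonempty → DirectedOn (· ≤ ·) d → d ⊆ A → sSup d ∈ A)
    {I : Set L} (hne : I.Nonempty) (hdir : DirectedOn (· ≤ ·) I)
    {p : List L × List L} (hp : Inv A p) : Inv A (grow A p I) := by
  have hU : ∀ g ∈ growU A p I, ∀ g' ∈ p.2, g ∈ A → g' ∈ A → g ⊔ g' ∉ A := by
    unfold growU
    split_ifs with hfired
    · intro g hg g' hg' hgA hg'A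
      rcases List.mem_append.mp hg with hg | hg
      · exact hp g hg g' hg' hgA hg'A
      · have hgsel : g = sel A I p.2 := by simpa using hg
        subst hgsel
        have hyp : I ⊆ A → ∀ g'' ∈ p.2, g'' ∈ A → sSup I ⊔ g'' ∉ A := by
          intro hIA g'' hg'' hg''A
          obtain ⟨g0, hg0, hg0le⟩ := hfired
          have hsupA : sSup I ∈ A := hAc hne hdir hIA
          have hg0A : g0 ∈ A := hlow hg0le hsupA
          have hnot := hp g0 hg0 g'' hg'' hg0A hg''A
          exact fun hmem => hnot (hlow (sup_le_sup_right hg0le g'') hmem)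
        rcases sel_spec (key hlow hAc hne hdir p.2 hyp) with hnA | hprop
        · exact absurd hgA hnA
        · exact hprop g' hg' hg'A
    · exact hp
  intro g hg g' hg' hgA hg'A
  have hg1 : g ∈ growU A p I := hg
  have hg2 : g' ∈ (if ∃ g0 ∈ p.2, g0 ≤ sSup I then p.2 ++ [sel A I (growU A p I)] else p.2) :=
    hg'
  clear hg hg'
  split_ifs at hg2 with hfired2
  · rcases List.mem_append.mp hg2 with hg2 | hg2
    · exact hU g hg1 g' hg2 hgA hg'A
    · have hgsel : g' = sel A I (growU A p I) := by simpa using hg2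
      subst hgsel
      have hyp : I ⊆ A → ∀ g'' ∈ growU A p I, g'' ∈ A → sSup I ⊔ g'' ∉ A := by
        intro hIA g'' hg'' hg''A
        obtain ⟨g0, hg0, hg0le⟩ := hfired2
        have hsupA : sSup I ∈ A := hAc hne hdir hIA
        have hg0A : g0 ∈ A := hlow hg0le hsupA
        have hnot := hU g'' hg'' g0 hg0 hg''A hg0A
        intro hmem
        exact hnot (hlow (sup_le (le_sup_right) (hg0le.trans le_sup_left)) hmem)
      rcases sel_spec (key hlow hAc hne hdir (growU A p I) hyp) with hnA | hprop
      · exact absurd hg'A hnA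
      · rw [sup_comm]
        exact hprop g hg1 hgA
  · exact hU g hg1 g' hg2 hgA hg'A

/-- The interleaved construction. -/
noncomputable def steps (A : Set L) (f : ℕ → Set L) (w₁ w₂ : L) : ℕ → List L × List L
  | 0 => ([w₁], [w₂])
  | n + 1 => grow A (steps A f w₁ w₂ n) (f (Nat.unpair n).1)

lemma steps_mono1 {A : Set L} {f : ℕ → Set L} {w₁ w₂ : L} {g : L} {m n : ℕ} (hmn : m ≤ n)
    (hg : g ∈ (steps A f w₁ w₂ m).1) : g ∈ (steps A f w₁ w₂ n).1 := by
  induction n with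
  | zero => simpa [Nat.le_zero.mp hmn] using hg
  | succ n ih =>
    rcases Nat.lt_or_ge m (n + 1) with h | h
    · exact grow_mem1 (ih (Nat.lt_succ_iff.mp h))
    · have : m = n + 1 := le_antisymm hmn h
      subst this; exact hg

lemma steps_mono2 {A : Set L} {f : ℕ → Set L} {w₁ w₂ : L} {g : L} {m n : ℕ} (hmn : m ≤ n)
    (hg : g ∈ (steps A f w₁ w₂ m).2) : g ∈ (steps A f w₁ w₂ n).2 := by
  induction n with
  | zero => simpa [Nat.le_zero.mp hmn] using hg
  | succ n ih =>
    rcases Nat.lt_or_ge m (n + 1) with h | h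
    · exact grow_mem2 (ih (Nat.lt_succ_iff.mp h))
    · have : m = n + 1 := le_antisymm hmn h
      subst this; exact hg

lemma steps_inv {A : Set L} {f : ℕ → Set L} {w₁ w₂ : L} (hlow : IsLowerSet A)
    (hAc : ∀ ⦃d : Set L⦄, d.Nonempty → DirectedOn (· ≤ ·) d → d ⊆ A → sSup d ∈ A)
    (hfne : ∀ n, (f n).Nonempty) (hfdir : ∀ n, DirectedOn (· ≤ ·) (f n))
    (hw : w₁ ∈ A → w₂ ∈ A → w₁ ⊔ w₂ ∉ A) :
    ∀ n, Inv A (steps A f w₁ w₂ n) := by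
  intro n
  induction n with
  | zero =>
    intro g hg g' hg' hgA hg'A
    have h1 : g = w₁ := by simpa [steps] using hg
    have h2 : g' = w₂ := by simpa [steps] using hg'
    subst h1; subst h2
    exact hw hgA hg'A
  | succ n ih =>
    exact grow_inv hlow hAc (hfne _) (hfdir _) ih

lemma steps_serve1 {A : Set L} {f : ℕ → Set L} {w₁ w₂ : L} (hfne : ∀ n, (f n).Nonempty)
    {k n : ℕ} (h : ∃ g ∈ (steps A f w₁ w₂ (Nat.pair k n)).1, g ≤ sSup (f k)) :
    ∃ y ∈ f k, y ∈ (steps A f w₁ w₂ (Nat.pair k n + 1)).1 := by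
  refine ⟨sel A (f k) (steps A f w₁ w₂ (Nat.pair k n)).2, sel_mem (hfne k), ?_⟩
  show _ ∈ (grow A (steps A f w₁ w₂ (Nat.pair k n)) (f (Nat.unpair (Nat.pair k n)).1)).1
  rw [Nat.unpair_pair]
  show _ ∈ growU A _ (f k)
  unfold growU
  rw [if_pos h]
  exact List.mem_append_right _ (List.mem_singleton_self _)

lemma steps_serve2 {A : Set L} {f : ℕ → Set L} {w₁ w₂ : L} (hfne : ∀ n, (f n).Nonempty)
    {k n : ℕ} (h : ∃ g ∈ (steps A f w₁ w₂ (Nat.pair k n)).2, g ≤ sSup (f k)) :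
    ∃ y ∈ f k, y ∈ (steps A f w₁ w₂ (Nat.pair k n + 1)).2 := by
  refine ⟨sel A (f k) (growU A (steps A f w₁ w₂ (Nat.pair k n)) (f k)), sel_mem (hfne k), ?_⟩
  show _ ∈ (grow A (steps A f w₁ w₂ (Nat.pair k n)) (f (Nat.unpair (Nat.pair k n)).1)).2
  rw [Nat.unpair_pair]
  have heq : (grow A (steps A f w₁ w₂ (Nat.pair k n)) (f k)).2
      = if ∃ g ∈ (steps A f w₁ w₂ (Nat.pair k n)).2, g ≤ sSup (f k) then
          (steps A f w₁ w₂ (Nat.pair k n)).2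
            ++ [sel A (f k) (growU A (steps A f w₁ w₂ (Nat.pair k n)) (f k))]
        else (steps A f w₁ w₂ (Nat.pair k n)).2 := rfl
  rw [heq, if_pos h]
  exact List.mem_append_right _ (List.mem_singleton_self _)

/-- The main order-theoretic lemma: an "irreducible" lower set closed under directed sups
contains its sup, provided there are only countably many non-trivial ideals. -/
lemma sSup_mem_of_irred (hcount : {I : Set L | NontrivialIdeal I}.Countable)
    {A : Set L} (hAne : A.Nonempty) (hlow : IsLowerSet A)
    (hAc : ∀ ⦃d : Set L⦄, d.Nonempty → DirectedOn (· ≤ ·) d → d ⊆ A → sSup d ∈ A)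
    (hpre : ∀ U V : Set L, IsUpperSet U → DirSupInacc U → IsUpperSet V → DirSupInacc V →
      (A ∩ U).Nonempty → (A ∩ V).Nonempty → (A ∩ (U ∩ V)).Nonempty) :
    sSup A ∈ A := by
  by_contra hs
  -- a pair of elements of A with sup outside A
  have hpair : ∃ w₁ ∈ A, ∃ w₂ ∈ A, w₁ ⊔ w₂ ∉ A := by
    by_contra hall
    push_neg at hall
    exact hs (hAc hAne (fun a ha b hb => ⟨a ⊔ b, hall a ha b hb, le_sup_left, le_sup_right⟩)
      Set.Subset.rfl)
  obtain ⟨w₁, hw₁A, w₂, hw₂A, hw12⟩ := hpair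
  -- enumerate ideals
  set 𝒩 : Set (Set L) := insert (Set.Iic (⊥ : L)) {I : Set L | NontrivialIdeal I} with h𝒩
  have h𝒩c : 𝒩.Countable := hcount.insert _
  obtain ⟨f, hf⟩ := h𝒩c.exists_eq_range ⟨_, Set.mem_insert _ _⟩
  have hfmem : ∀ n, f n ∈ 𝒩 := fun n => by rw [hf]; exact Set.mem_range_self n
  have hfne : ∀ n, (f n).Nonempty := by
    intro n
    rcases Set.mem_insert_iff.mp (hfmem n) with h | h
    · rw [h]; exact ⟨⊥, le_rfl⟩
    · exact h.1
  have hfdir : ∀ n, DirectedOn (· ≤ ·) (f n) := by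
    intro n
    rcases Set.mem_insert_iff.mp (hfmem n) with h | h
    · rw [h]; exact fun x hx y hy => ⟨⊥, le_rfl, hx, hy⟩
    · exact h.2.1
  have hsurj : ∀ I : Set L, NontrivialIdeal I → ∃ k, f k = I := by
    intro I hI
    have : I ∈ 𝒩 := Set.mem_insert_of_mem _ hI
    rw [hf] at this
    obtain ⟨k, hk⟩ := this
    exact ⟨k, hk⟩
  -- the two open sets
  set U : Set L := {x | ∃ n, ∃ g ∈ (steps A f w₁ w₂ n).1, g ≤ x} with hU
  set V : Set L := {x | ∃ n, ∃ g ∈ (steps A f w₁ w₂ n).2, g ≤ x} with hV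
  have hUup : IsUpperSet U := by
    intro a b hab ⟨n, g, hg, hga⟩
    exact ⟨n, g, hg, hga.trans hab⟩
  have hVup : IsUpperSet V := by
    intro a b hab ⟨n, g, hg, hga⟩
    exact ⟨n, g, hg, hga.trans hab⟩
  -- inaccessibility of U
  have hUinacc : DirSupInacc U := by
    intro d hdne hdir a hlub haU
    by_cases hmax : ∃ m ∈ {x : L | ∃ b ∈ d, x ≤ b}, ∀ x ∈ {x : L | ∃ b ∈ d, x ≤ b}, x ≤ m
    · obtain ⟨m, ⟨b, hbd, hmb⟩, hm⟩ := hmax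
      have ham : a ≤ m := hlub.2 (fun x hx => hm x ⟨x, hx, le_rfl⟩)
      exact ⟨b, hbd, hUup (ham.trans hmb) haU⟩
    · have hNI : NontrivialIdeal {x : L | ∃ b ∈ d, x ≤ b} := by
        refine ⟨⟨hdne.choose, hdne.choose, hdne.choose_spec, le_rfl⟩, ?_, ?_, hmax⟩
        · rintro x ⟨b1, hb1, hxb1⟩ y ⟨b2, hb2, hyb2⟩
          obtain ⟨b3, hb3, h13, h23⟩ := hdir b1 hb1 b2 hb2
          exact ⟨b3, ⟨b3, hb3, le_rfl⟩, hxb1.trans h13, hyb2.trans h23⟩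
        · rintro x y hyx ⟨b, hb, hxb⟩
          exact ⟨b, hb, hyx.trans hxb⟩
      obtain ⟨k, hk⟩ := hsurj _ hNI
      have hsupk : sSup (f k) = a := by
        rw [hk]
        refine IsLUB.sSup_eq ⟨?_, ?_⟩
        · rintro x ⟨b, hb, hxb⟩
          exact hxb.trans (hlub.1 hb)
        · exact fun u hu => hlub.2 (fun x hx => hu ⟨x, hx, le_rfl⟩)
      obtain ⟨n, g, hg, hga⟩ := haU
      have hfired : ∃ g' ∈ (steps A f w₁ w₂ (Nat.pair k n)).1, g' ≤ sSup (f k) :=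
        ⟨g, steps_mono1 (Nat.right_le_pair k n) hg, by rw [hsupk]; exact hga⟩
      obtain ⟨y, hyI, hymem⟩ := steps_serve1 hfne hfired
      rw [hk] at hyI
      obtain ⟨b, hbd, hyb⟩ := hyI
      exact ⟨b, hbd, ⟨Nat.pair k n + 1, y, hymem, hyb⟩⟩
  -- inaccessibility of V
  have hVinacc : DirSupInacc V := by
    intro d hdne hdir a hlub haV
    by_cases hmax : ∃ m ∈ {x : L | ∃ b ∈ d, x ≤ b}, ∀ x ∈ {x : L | ∃ b ∈ d, x ≤ b}, x ≤ m
    · obtain ⟨m, ⟨b, hbd, hmb⟩, hm⟩ := hmax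
      have ham : a ≤ m := hlub.2 (fun x hx => hm x ⟨x, hx, le_rfl⟩)
      exact ⟨b, hbd, hVup (ham.trans hmb) haV⟩
    · have hNI : NontrivialIdeal {x : L | ∃ b ∈ d, x ≤ b} := by
        refine ⟨⟨hdne.choose, hdne.choose, hdne.choose_spec, le_rfl⟩, ?_, ?_, hmax⟩
        · rintro x ⟨b1, hb1, hxb1⟩ y ⟨b2, hb2, hyb2⟩
          obtain ⟨b3, hb3, h13, h23⟩ := hdir b1 hb1 b2 hb2
          exact ⟨b3, ⟨b3, hb3, le_rfl⟩, hxb1.trans h13, hyb2.trans h23⟩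
        · rintro x y hyx ⟨b, hb, hxb⟩
          exact ⟨b, hb, hyx.trans hxb⟩
      obtain ⟨k, hk⟩ := hsurj _ hNI
      have hsupk : sSup (f k) = a := by
        rw [hk]
        refine IsLUB.sSup_eq ⟨?_, ?_⟩
        · rintro x ⟨b, hb, hxb⟩
          exact hxb.trans (hlub.1 hb)
        · exact fun u hu => hlub.2 (fun x hx => hu ⟨x, hx, le_rfl⟩)
      obtain ⟨n, g, hg, hga⟩ := haV
      have hfired : ∃ g' ∈ (steps A f w₁ w₂ (Nat.pair k n)).2, g' ≤ sSup (f k) :=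
        ⟨g, steps_mono2 (Nat.right_le_pair k n) hg, by rw [hsupk]; exact hga⟩
      obtain ⟨y, hyI, hymem⟩ := steps_serve2 hfne hfired
      rw [hk] at hyI
      obtain ⟨b, hbd, hyb⟩ := hyI
      exact ⟨b, hbd, ⟨Nat.pair k n + 1, y, hymem, hyb⟩⟩
  -- both meet A
  have hw₁U : w₁ ∈ U := ⟨0, w₁, by simp [steps], le_rfl⟩
  have hw₂V : w₂ ∈ V := ⟨0, w₂, by simp [steps], le_rfl⟩
  -- contradiction
  obtain ⟨c, hcA, hcU, hcV⟩ := hpre U V hUup hUinacc hVup hVinacc ⟨w₁, hw₁A, hw₁U⟩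
    ⟨w₂, hw₂A, hw₂V⟩
  obtain ⟨n, g, hg, hgc⟩ := hcU
  obtain ⟨m, g', hg', hg'c⟩ := hcV
  have hgN : g ∈ (steps A f w₁ w₂ (max n m)).1 := steps_mono1 (le_max_left n m) hg
  have hg'N : g' ∈ (steps A f w₁ w₂ (max n m)).2 := steps_mono2 (le_max_right n m) hg'
  have hinv := steps_inv hlow hAc hfne hfdir (fun _ _ => hw12) (max n m) g hgN g' hg'N
    (hlow hgc hcA) (hlow hg'c hcA)
  exact hinv (hlow (sup_le hgc hg'c) hcA)

end CountIdealSober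

/-- A complete lattice whose set of non-trivial ideals is countable has a sober Scott space. -/
theorem completeLattice_sober_of_countableIdeals {L : Type*} [CompleteLattice L]
    (hcount : {I : Set L | NontrivialIdeal I}.Countable) :
    @SoberSpace L (Topology.scott L Set.univ) := by
  letI : TopologicalSpace L := Topology.scott L Set.univ
  haveI : Topology.IsScott L Set.univ := ⟨rfl⟩
  constructor
  · infer_instance
  · constructor
    intro S hS hSc
    have hlow : IsLowerSet S := Topology.IsScott.isLowerSet_of_isClosed hSc
    have hdc : DirSupClosed S := Topology.IsScott.dirSupClosed_of_isClosed hSc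
    have hAc : ∀ ⦃d : Set L⦄, d.Nonempty → DirectedOn (· ≤ ·) d → d ⊆ S → sSup d ∈ S :=
      fun d h1 h2 h3 => hdc h3 h1 h2 (isLUB_sSup d)
    have hpre : ∀ U V : Set L, IsUpperSet U → DirSupInacc U → IsUpperSet V → DirSupInacc V →
        (S ∩ U).Nonempty → (S ∩ V).Nonempty → (S ∩ (U ∩ V)).Nonempty := by
      intro U V hU1 hU2 hV1 hV2 h1 h2
      have hUo : IsOpen U :=
        (Topology.IsScott.isOpen_iff_isUpperSet_and_dirSupInaccOn (D := Set.univ)).mpr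
          ⟨hU1, hU2.dirSupInaccOn⟩
      have hVo : IsOpen V :=
        (Topology.IsScott.isOpen_iff_isUpperSet_and_dirSupInaccOn (D := Set.univ)).mpr
          ⟨hV1, hV2.dirSupInaccOn⟩
      exact hS.2 U V hUo hVo h1 h2
    have hmem : sSup S ∈ S := CountIdealSober.sSup_mem_of_irred hcount hS.1 hlow hAc hpre
    refine ⟨sSup S, ?_⟩
    show closure {sSup S} = S
    rw [Topology.IsScott.closure_singleton]
    ext x
    simp only [Set.mem_Iic]
    exact ⟨fun hx => hlow hx hmem, fun hx => le_sSup hx⟩
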